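/- Fix an integer k ≥ 1 and let G = (ZMod 3)^k with S_k acting by permuting coordinates. For every a, b, c ∈ G, the number M([a],[b],[c]) of S_k-orbits on T([a],[b],[c]) = {(x,y,z) ∈ [a]×[b]×[c] : x + y + z = 0} is a triangular number: there exists a nonnegative integer n with M([a],[b],[c]) = n(n+1)/2. -/

import Mathlib

open Finset

def permOrbit {N k : ℕ} (a : Fin k → ZMod N) : Set (Fin k → ZMod N) :=
  {x | ∃ σ : Equiv.Perm (Fin k), x = fun i => a (σ i)}

def TripleSet (N k : ℕ) (a b c : Fin k → ZMod N) : Type :=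
  {t : (Fin k → ZMod N) × (Fin k → ZMod N) × (Fin k → ZMod N) //
    t.1 ∈ permOrbit a ∧ t.2.1 ∈ permOrbit b ∧ t.2.2 ∈ permOrbit c ∧
    t.1 + t.2.1 + t.2.2 = 0}

noncomputable def Morbits (N k : ℕ) (a b c : Fin k → ZMod N) : ℕ :=
  Nat.card (Quot fun t t' : TripleSet N k a b c =>
    ∃ σ : Equiv.Perm (Fin k),
      (∀ i, t'.1.1 i = t.1.1 (σ i)) ∧ (∀ i, t'.1.2.1 i = t.1.2.1 (σ i)) ∧
      (∀ i, t'.1.2.2 i = t.1.2.2 (σ i)))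

def cnt {N k : ℕ} (a : Fin k → ZMod N) (j : ZMod N) : ℕ :=
  (Finset.univ.filter fun i => a i = j).card

namespace Rank3Aux

variable {k : ℕ}

lemma sum3 (f : ZMod 3 → ℕ) : ∑ x, f x = f 0 + f 1 + f 2 := by
  show ∑ x : Fin 3, f x = _
  exact Fin.sum_univ_three f

lemma zmod3_cases (u : ZMod 3) : u = 0 ∨ u = 1 ∨ u = 2 := by revert u; decide

/-- pair count -/
def pcnt (x y : Fin k → ZMod 3) (u v : ZMod 3) : ℕ :=
  (Finset.univ.filter fun i => (x i, y i) = (u, v)).card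

lemma exists_perm_of_counts {β : Type} [DecidableEq β] (f g : Fin k → β)
    (h : ∀ b : β, (univ.filter fun i => f i = b).card = (univ.filter fun i => g i = b).card) :
    ∃ σ : Equiv.Perm (Fin k), ∀ i, g i = f (σ i) := by
  have e : ∀ b : β, {i // f i = b} ≃ {i // g i = b} := fun b =>
    Fintype.equivOfCardEq (by simp only [Fintype.card_subtype]; exact h b)
  refine ⟨((Equiv.sigmaFiberEquiv g).symm.trans (Equiv.sigmaCongrRight e).symm).trans
      (Equiv.sigmaFiberEquiv f), fun i => ?_⟩
  exact (((e (g i)).symm ⟨i, rfl⟩).2).symm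

lemma counts_of_perm {β : Type} [DecidableEq β] (f : Fin k → β) (σ : Equiv.Perm (Fin k))
    (b : β) : (univ.filter fun i => f (σ i) = b).card = (univ.filter fun i => f i = b).card := by
  apply Finset.card_bij (fun i _ => σ i)
  · intro i hi; simp_all
  · intro i _ j _ hij; exact σ.injective hij
  · intro j hj; exact ⟨σ.symm j, by simp_all, by simp⟩

lemma exists_fun_of_counts {β : Type} [DecidableEq β] [Fintype β] (m : β → ℕ)
    (hm : ∑ b, m b = k) : ∃ f : Fin k → β, ∀ b, (univ.filter fun i => f i = b).card = m b := by
  have e : Fin k ≃ Σ b : β, Fin (m b) :=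
    Fintype.equivOfCardEq (by simp [Fintype.card_sigma, hm])
  refine ⟨fun i => (e i).1, fun b => ?_⟩
  have h1 : (univ.filter fun i => (e i).1 = b).card = Fintype.card {i : Fin k // (e i).1 = b} :=
    (Fintype.card_subtype _).symm
  have e2 : {i : Fin k // (e i).1 = b} ≃ {p : Σ b : β, Fin (m b) // p.1 = b} :=
    e.subtypeEquiv (fun i => Iff.rfl)
  have e3 : {p : Σ b : β, Fin (m b) // p.1 = b} ≃ Fin (m b) :=
    { toFun := fun p => p.1.2.cast (by rw [p.2])
      invFun := fun j => ⟨⟨b, j⟩, rfl⟩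
      left_inv := by rintro ⟨⟨b', j⟩, rfl⟩; rfl
      right_inv := by intro j; rfl }
  rw [h1, Fintype.card_congr (e2.trans e3), Fintype.card_fin]

lemma cnt_perm (a : Fin k → ZMod 3) (σ : Equiv.Perm (Fin k)) (u : ZMod 3) :
    cnt (fun i => a (σ i)) u = cnt a u := counts_of_perm a σ u

lemma filter_pair (x y : Fin k → ZMod 3) (u v : ZMod 3) :
    ((univ.filter fun i => x i = u).filter fun i => y i = v).card = pcnt x y u v := by
  rw [Finset.filter_filter]
  unfold pcnt
  congr 1
  apply Finset.filter_congr
  intro i _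
  simp [Prod.ext_iff]

lemma filter_pair' (x y : Fin k → ZMod 3) (u v : ZMod 3) :
    ((univ.filter fun i => y i = v).filter fun i => x i = u).card = pcnt x y u v := by
  rw [Finset.filter_filter]
  unfold pcnt
  congr 1
  apply Finset.filter_congr
  intro i _
  simp [Prod.ext_iff, and_comm]

lemma row_eq (x y : Fin k → ZMod 3) (u : ZMod 3) :
    cnt x u = pcnt x y u 0 + pcnt x y u 1 + pcnt x y u 2 := by
  have h := Finset.card_eq_sum_card_fiberwise
    (s := univ.filter fun i => x i = u) (t := (univ : Finset (ZMod 3)))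
    (f := fun i => y i) (fun i _ => mem_univ _)
  rw [cnt, h, sum3, filter_pair, filter_pair, filter_pair]

lemma col_eq (x y : Fin k → ZMod 3) (v : ZMod 3) :
    cnt y v = pcnt x y 0 v + pcnt x y 1 v + pcnt x y 2 v := by
  have h := Finset.card_eq_sum_card_fiberwise
    (s := univ.filter fun i => y i = v) (t := (univ : Finset (ZMod 3)))
    (f := fun i => x i) (fun i _ => mem_univ _)
  rw [cnt, h, sum3, filter_pair', filter_pair', filter_pair']

lemma filter_diag (x y : Fin k → ZMod 3) (w u v : ZMod 3) (hv : v = -u - w) :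
    ((univ.filter fun i => -x i - y i = w).filter fun i => x i = u).card = pcnt x y u v := by
  rw [Finset.filter_filter]
  unfold pcnt
  congr 1
  apply Finset.filter_congr
  intro i _
  subst hv
  simp only [Prod.ext_iff]
  constructor
  · rintro ⟨h1, h2⟩
    refine ⟨h2, ?_⟩
    rw [h2] at h1
    linear_combination -h1
  · rintro ⟨h1, h2⟩
    refine ⟨?_, h1⟩
    rw [h1, h2]
    ring

lemma diag_eqw (x y : Fin k → ZMod 3) (w v0 v1 v2 : ZMod 3)
    (h0 : v0 = -0 - w) (h1 : v1 = -1 - w) (h2 : v2 = -2 - w) :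
    cnt (fun i => -x i - y i) w
      = pcnt x y 0 v0 + pcnt x y 1 v1 + pcnt x y 2 v2 := by
  have h := Finset.card_eq_sum_card_fiberwise
    (s := univ.filter fun i => -x i - y i = w) (t := (univ : Finset (ZMod 3)))
    (f := fun i => x i) (fun i _ => mem_univ _)
  rw [cnt, h, sum3, filter_diag x y w 0 v0 (by rw [h0]), filter_diag x y w 1 v1 (by rw [h1]),
    filter_diag x y w 2 v2 (by rw [h2])]

/-- explicit row/column/diagonal constraints -/
def IsMat (a b c : Fin k → ZMod 3) (m : ZMod 3 → ZMod 3 → ℕ) : Prop :=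
  m 0 0 + m 0 1 + m 0 2 = cnt a 0 ∧ m 1 0 + m 1 1 + m 1 2 = cnt a 1 ∧
  m 2 0 + m 2 1 + m 2 2 = cnt a 2 ∧
  m 0 0 + m 1 0 + m 2 0 = cnt b 0 ∧ m 0 1 + m 1 1 + m 2 1 = cnt b 1 ∧
  m 0 2 + m 1 2 + m 2 2 = cnt b 2 ∧
  m 0 0 + m 1 2 + m 2 1 = cnt c 0 ∧ m 0 2 + m 1 1 + m 2 0 = cnt c 1 ∧
  m 0 1 + m 1 0 + m 2 2 = cnt c 2

lemma cnt_total (a : Fin k → ZMod 3) : cnt a 0 + cnt a 1 + cnt a 2 = k := by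
  have h := Finset.card_eq_sum_card_fiberwise
    (s := (univ : Finset (Fin k))) (t := (univ : Finset (ZMod 3)))
    (f := fun i => a i) (fun i _ => mem_univ _)
  have : (univ : Finset (Fin k)).card = ∑ b : ZMod 3, cnt a b := h
  rw [sum3] at this
  rw [← this, Finset.card_univ, Fintype.card_fin]

lemma neg_sub_eq (x y z : Fin k → ZMod 3) (hz : x + y + z = 0) (i : Fin k) :
    z i = -x i - y i := by
  have := congrFun hz i
  simp only [Pi.add_apply, Pi.zero_apply] at this
  linear_combination this

lemma isMat_of_triple (a b c : Fin k → ZMod 3) (t : TripleSet 3 k a b c) :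
    IsMat a b c (pcnt t.1.1 t.1.2.1) := by
  obtain ⟨⟨x, y, z⟩, ⟨σa, ha⟩, ⟨σb, hb⟩, ⟨σc, hc⟩, hsum⟩ := t
  dsimp only at ha hb hc hsum ⊢
  have hzz : z = fun i => -x i - y i := funext (neg_sub_eq x y z hsum)
  have hca : ∀ u, cnt x u = cnt a u := by intro u; rw [ha]; exact cnt_perm a σa u
  have hcb : ∀ v, cnt y v = cnt b v := by intro v; rw [hb]; exact cnt_perm b σb v
  have hcc : ∀ w, cnt (fun i => -x i - y i) w = cnt c w := by
    intro w; rw [← hzz, hc]; exact cnt_perm c σc w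
  refine ⟨?_, ?_, ?_, ?_, ?_, ?_, ?_, ?_, ?_⟩
  · rw [← hca 0, row_eq x y 0]
  · rw [← hca 1, row_eq x y 1]
  · rw [← hca 2, row_eq x y 2]
  · rw [← hcb 0, col_eq x y 0]
  · rw [← hcb 1, col_eq x y 1]
  · rw [← hcb 2, col_eq x y 2]
  · have := diag_eqw x y 0 0 2 1 (by decide) (by decide) (by decide)
    rw [← hcc 0, this]
  · have := diag_eqw x y 1 2 1 0 (by decide) (by decide) (by decide)
    rw [← hcc 1, this]
  · have := diag_eqw x y 2 1 0 2 (by decide) (by decide) (by decide)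
    rw [← hcc 2, this]

lemma pcnt_perm (x y : Fin k → ZMod 3) (σ : Equiv.Perm (Fin k)) (u v : ZMod 3) :
    pcnt (fun i => x (σ i)) (fun i => y (σ i)) u v = pcnt x y u v :=
  counts_of_perm (fun i => (x i, y i)) σ (u, v)

lemma exists_triple (a b c : Fin k → ZMod 3) (m : ZMod 3 → ZMod 3 → ℕ)
    (hm : IsMat a b c m) :
    ∃ t : TripleSet 3 k a b c, ∀ u v, pcnt t.1.1 t.1.2.1 u v = m u v := by
  obtain ⟨r1, r2, r3, c1, c2, c3, d1, d2, d3⟩ := hm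
  have htot : ∑ p : ZMod 3 × ZMod 3, m p.1 p.2 = k := by
    rw [Fintype.sum_prod_type]
    have : ∑ u : ZMod 3, ∑ v : ZMod 3, m u v
        = (m 0 0 + m 0 1 + m 0 2) + ((m 1 0 + m 1 1 + m 1 2) + (m 2 0 + m 2 1 + m 2 2)) := by
      rw [sum3 (fun u => ∑ v, m u v), sum3 (m 0), sum3 (m 1), sum3 (m 2)]
      ring
    rw [this, r1, r2, r3]
    have := cnt_total a
    omega
  obtain ⟨f, hf⟩ := exists_fun_of_counts (fun p : ZMod 3 × ZMod 3 => m p.1 p.2) htot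
  set x : Fin k → ZMod 3 := fun i => (f i).1 with hx
  set y : Fin k → ZMod 3 := fun i => (f i).2 with hy
  set z : Fin k → ZMod 3 := fun i => -x i - y i with hz
  have hp : ∀ u v, pcnt x y u v = m u v := by
    intro u v
    rw [← hf (u, v)]
    unfold pcnt
    congr 1
    all_goals try (apply Finset.filter_congr; intro i _; simp [hx, hy, Prod.ext_iff])
  have hcx : ∀ u, cnt a u = cnt x u := by
    intro u
    rw [row_eq x y u, hp, hp, hp]
    rcases zmod3_cases u with h | h | h <;> subst h <;> omega
  have hcy : ∀ v, cnt b v = cnt y v := by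
    intro v
    rw [col_eq x y v, hp, hp, hp]
    rcases zmod3_cases v with h | h | h <;> subst h <;> omega
  have hcz : ∀ w, cnt c w = cnt z w := by
    intro w
    rcases zmod3_cases w with h | h | h <;> subst h
    · rw [hz, diag_eqw x y 0 0 2 1 (by decide) (by decide) (by decide), hp, hp, hp]; omega
    · rw [hz, diag_eqw x y 1 2 1 0 (by decide) (by decide) (by decide), hp, hp, hp]; omega
    · rw [hz, diag_eqw x y 2 1 0 2 (by decide) (by decide) (by decide), hp, hp, hp]; omega
  obtain ⟨σa, hσa⟩ := exists_perm_of_counts a x hcx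
  obtain ⟨σb, hσb⟩ := exists_perm_of_counts b y hcy
  obtain ⟨σc, hσc⟩ := exists_perm_of_counts c z hcz
  refine ⟨⟨(x, y, z), ⟨σa, funext hσa⟩, ⟨σb, funext hσb⟩, ⟨σc, funext hσc⟩, ?_⟩, hp⟩
  funext i
  simp only [Pi.add_apply, Pi.zero_apply, hz]
  ring

lemma morbits_eq_matcard (a b c : Fin k → ZMod 3) :
    Morbits 3 k a b c = Nat.card {m : ZMod 3 → ZMod 3 → ℕ // IsMat a b c m} := by
  apply Nat.card_eq_of_bijective
    (Quot.lift (fun t : TripleSet 3 k a b c =>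
        (⟨pcnt t.1.1 t.1.2.1, isMat_of_triple a b c t⟩ :
          {m : ZMod 3 → ZMod 3 → ℕ // IsMat a b c m}))
      (by
        rintro t t' ⟨σ, h1, h2, h3⟩
        apply Subtype.ext
        funext u v
        dsimp only
        have e1 : t'.1.1 = fun i => t.1.1 (σ i) := funext h1
        have e2 : t'.1.2.1 = fun i => t.1.2.1 (σ i) := funext h2
        rw [e1, e2, pcnt_perm]
        ))
  constructor
  · apply Quot.ind; intro t
    apply Quot.ind; intro t'
    intro h
    have hq : ∀ u v, pcnt t.1.1 t.1.2.1 u v = pcnt t'.1.1 t'.1.2.1 u v := by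
      intro u v
      exact congrFun (congrFun (congrArg Subtype.val h) u) v
    obtain ⟨σ, hσ⟩ := exists_perm_of_counts (fun i => (t.1.1 i, t.1.2.1 i))
      (fun i => (t'.1.1 i, t'.1.2.1 i)) (fun p => hq p.1 p.2)
    apply Quot.sound
    have h1 : ∀ i, t'.1.1 i = t.1.1 (σ i) := fun i => congrArg Prod.fst (hσ i)
    have h2 : ∀ i, t'.1.2.1 i = t.1.2.1 (σ i) := fun i => congrArg Prod.snd (hσ i)
    refine ⟨σ, h1, h2, fun i => ?_⟩
    rw [neg_sub_eq t.1.1 t.1.2.1 t.1.2.2 t.2.2.2.2 (σ i),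
      neg_sub_eq t'.1.1 t'.1.2.1 t'.1.2.2 t'.2.2.2.2 i, h1 i, h2 i]
  · rintro ⟨m, hm⟩
    obtain ⟨t, ht⟩ := exists_triple a b c m hm
    refine ⟨Quot.mk _ t, ?_⟩
    apply Subtype.ext
    funext u v
    exact ht u v

lemma triangle_count (s : ℕ) :
    Nat.card {p : ℕ × ℕ × ℕ // p.1 + p.2.1 + p.2.2 = s} = (s + 1) * (s + 2) / 2 := by
  have e : {p : ℕ × ℕ × ℕ // p.1 + p.2.1 + p.2.2 = s} ≃ Σ x : Fin (s + 1), Fin (s + 1 - x) :=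
    { toFun := fun p => ⟨⟨p.1.1, by have := p.2; omega⟩,
        ⟨p.1.2.1, show p.1.2.1 < s + 1 - p.1.1 by have := p.2; omega⟩⟩
      invFun := fun q => ⟨(q.1.1, q.2.1, s - q.1.1 - q.2.1), by
        have h1 := q.1.2
        have h2 : (q.2 : ℕ) < s + 1 - q.1.1 := q.2.2
        show q.1.1 + q.2.1 + (s - q.1.1 - q.2.1) = s
        omega⟩
      left_inv := by
        rintro ⟨⟨p, q, r⟩, h⟩
        have h' : p + q + r = s := h
        apply Subtype.ext
        show ((p : ℕ), (q : ℕ), s - p - q) = (p, q, r)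
        rw [show s - p - q = r by omega]
      right_inv := fun q => rfl }
  rw [Nat.card_congr e, Nat.card_eq_fintype_card, Fintype.card_sigma]
  simp only [Fintype.card_fin]
  rw [Fin.sum_univ_eq_sum_range]
  have h1 : ∑ i ∈ Finset.range (s + 1), (s + 1 - i) = ∑ i ∈ Finset.range (s + 1), (i + 1) := by
    rw [← Finset.sum_range_reflect]
    apply Finset.sum_congr rfl
    intro i hi
    simp only [Finset.mem_range] at hi
    omega
  have h2 : ∑ i ∈ Finset.range (s + 2), (i : ℕ) = ∑ i ∈ Finset.range (s + 1), (i + 1) := by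
    rw [Finset.sum_range_succ' (fun i => (i : ℕ)) (s + 1)]
    simp
  rw [h1, ← h2, Finset.sum_range_id]
  have : s + 2 - 1 = s + 1 := by omega
  rw [this, Nat.mul_comm]

def bwd (m0 : ZMod 3 → ZMod 3 → ℕ) (μ0 μ1 μ2 p q r : ℕ) : ZMod 3 → ZMod 3 → ℕ :=
  fun u v =>
    if u - v = 0 then m0 u v - μ0 + p
    else if u - v = 1 then m0 u v - μ1 + q
    else m0 u v - μ2 + r

lemma bwd_eval (m0 : ZMod 3 → ZMod 3 → ℕ) (μ0 μ1 μ2 p q r : ℕ) :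
    bwd m0 μ0 μ1 μ2 p q r 0 0 = m0 0 0 - μ0 + p ∧
    bwd m0 μ0 μ1 μ2 p q r 0 1 = m0 0 1 - μ2 + r ∧
    bwd m0 μ0 μ1 μ2 p q r 0 2 = m0 0 2 - μ1 + q ∧
    bwd m0 μ0 μ1 μ2 p q r 1 0 = m0 1 0 - μ1 + q ∧
    bwd m0 μ0 μ1 μ2 p q r 1 1 = m0 1 1 - μ0 + p ∧
    bwd m0 μ0 μ1 μ2 p q r 1 2 = m0 1 2 - μ2 + r ∧
    bwd m0 μ0 μ1 μ2 p q r 2 0 = m0 2 0 - μ2 + r ∧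
    bwd m0 μ0 μ1 μ2 p q r 2 1 = m0 2 1 - μ1 + q ∧
    bwd m0 μ0 μ1 μ2 p q r 2 2 = m0 2 2 - μ0 + p := by
  unfold bwd
  refine ⟨?_, ?_, ?_, ?_, ?_, ?_, ?_, ?_, ?_⟩
  · rw [if_pos (by decide)]
  · rw [if_neg (by decide), if_neg (by decide)]
  · rw [if_neg (by decide), if_pos (by decide)]
  · rw [if_neg (by decide), if_pos (by decide)]
  · rw [if_pos (by decide)]
  · rw [if_neg (by decide), if_neg (by decide)]
  · rw [if_neg (by decide), if_neg (by decide)]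
  · rw [if_neg (by decide), if_pos (by decide)]
  · rw [if_pos (by decide)]

set_option maxHeartbeats 4000000 in
lemma mat_diff_arith (m00 m01 m02 m10 m11 m12 m20 m21 m22
    n00 n01 n02 n10 n11 n12 n20 n21 n22 A0 A1 A2 B0 B1 B2 C0 C1 C2 : ℕ)
    (r1 : m00 + m01 + m02 = A0) (r2 : m10 + m11 + m12 = A1) (r3 : m20 + m21 + m22 = A2)
    (c1 : m00 + m10 + m20 = B0) (c2 : m01 + m11 + m21 = B1) (c3 : m02 + m12 + m22 = B2)
    (d1 : m00 + m12 + m21 = C0) (d2 : m02 + m11 + m20 = C1) (d3 : m01 + m10 + m22 = C2)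
    (r1' : n00 + n01 + n02 = A0) (r2' : n10 + n11 + n12 = A1) (r3' : n20 + n21 + n22 = A2)
    (c1' : n00 + n10 + n20 = B0) (c2' : n01 + n11 + n21 = B1) (c3' : n02 + n12 + n22 = B2)
    (d1' : n00 + n12 + n21 = C0) (d2' : n02 + n11 + n20 = C1) (d3' : n01 + n10 + n22 = C2) :
    m00 + n11 = m11 + n00 ∧ m00 + n22 = m22 + n00 ∧
    m10 + n21 = m21 + n10 ∧ m10 + n02 = m02 + n10 ∧
    m20 + n01 = m01 + n20 ∧ m20 + n12 = m12 + n20 ∧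
    m00 + m10 + m20 = n00 + n10 + n20 := by omega

lemma mat_diff (a b c : Fin k → ZMod 3) (m m0 : ZMod 3 → ZMod 3 → ℕ)
    (hm : IsMat a b c m) (hm0 : IsMat a b c m0) :
    m 0 0 + m0 1 1 = m 1 1 + m0 0 0 ∧ m 0 0 + m0 2 2 = m 2 2 + m0 0 0 ∧
    m 1 0 + m0 2 1 = m 2 1 + m0 1 0 ∧ m 1 0 + m0 0 2 = m 0 2 + m0 1 0 ∧
    m 2 0 + m0 0 1 = m 0 1 + m0 2 0 ∧ m 2 0 + m0 1 2 = m 1 2 + m0 2 0 ∧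
    m 0 0 + m 1 0 + m 2 0 = m0 0 0 + m0 1 0 + m0 2 0 := by
  obtain ⟨r1, r2, r3, c1, c2, c3, d1, d2, d3⟩ := hm
  obtain ⟨r1', r2', r3', c1', c2', c3', d1', d2', d3'⟩ := hm0
  exact mat_diff_arith _ _ _ _ _ _ _ _ _ _ _ _ _ _ _ _ _ _ _ _ _ _ _ _ _ _ _
    r1 r2 r3 c1 c2 c3 d1 d2 d3 r1' r2' r3' c1' c2' c3' d1' d2' d3'

lemma arith_valid (m00 m11 m22 n00 n11 n22 μ : ℕ)
    (h1 : m00 + n11 = m11 + n00) (h2 : m00 + n22 = m22 + n00)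
    (hμ : μ = min n00 (min n11 n22)) : n00 ≤ m00 + μ := by omega

lemma arith_fwd (m00 m10 m20 n00 n10 n20 μ0 μ1 μ2 : ℕ)
    (hc : m00 + m10 + m20 = n00 + n10 + n20)
    (v0 : n00 ≤ m00 + μ0) (v1 : n10 ≤ m10 + μ1) (v2 : n20 ≤ m20 + μ2) :
    m00 + μ0 - n00 + (m10 + μ1 - n10) + (m20 + μ2 - n20) = μ0 + μ1 + μ2 := by omega

lemma arith_line (n1 n2 n3 v1 v2 v3 g1 g2 g3 A : ℕ)
    (e : n1 + n2 + n3 = A) (h1 : v1 ≤ n1) (h2 : v2 ≤ n2) (h3 : v3 ≤ n3)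
    (hg : g1 + g2 + g3 = v1 + v2 + v3) :
    n1 - v1 + g1 + (n2 - v2 + g2) + (n3 - v3 + g3) = A := by omega

lemma arith_cell (nuv nd0 muv md0 μ : ℕ)
    (hdiff : md0 + nuv = muv + nd0) (hμ : μ ≤ nuv) (hok : nd0 ≤ md0 + μ) :
    nuv - μ + (md0 + μ - nd0) = muv := by omega

lemma arith_rinv (n μ p : ℕ) (h : μ ≤ n) : n - μ + p + μ - n = p := by omega

lemma sum3_perm (x y z u v w : ℕ) (h : x + y + z = u + v + w) :
    x + z + y = u + w + v ∧ y + x + z = v + u + w ∧ z + y + x = w + v + u ∧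
    z + x + y = w + u + v ∧ y + z + x = v + w + u := by omega

lemma min3_le (a b c : ℕ) : min a (min b c) ≤ a ∧ min a (min b c) ≤ b ∧
    min a (min b c) ≤ c := by omega

lemma bwd_isMat (a b c : Fin k → ZMod 3) (m0 : ZMod 3 → ZMod 3 → ℕ) (hm0 : IsMat a b c m0)
    (μ0 μ1 μ2 p q r : ℕ)
    (h0 : μ0 = min (m0 0 0) (min (m0 1 1) (m0 2 2)))
    (h1 : μ1 = min (m0 1 0) (min (m0 2 1) (m0 0 2)))
    (h2 : μ2 = min (m0 2 0) (min (m0 0 1) (m0 1 2)))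
    (hs : p + q + r = μ0 + μ1 + μ2) :
    IsMat a b c (bwd m0 μ0 μ1 μ2 p q r) := by
  have t0 := min3_le (m0 0 0) (m0 1 1) (m0 2 2)
  have t1 := min3_le (m0 1 0) (m0 2 1) (m0 0 2)
  have t2 := min3_le (m0 2 0) (m0 0 1) (m0 1 2)
  rw [← h0] at t0
  rw [← h1] at t1
  rw [← h2] at t2
  obtain ⟨ha0, hb0, hc0⟩ := t0
  obtain ⟨ha1, hb1, hc1⟩ := t1
  obtain ⟨ha2, hb2, hc2⟩ := t2
  obtain ⟨s1, s2, s3, s4, s5⟩ := sum3_perm p q r μ0 μ1 μ2 hs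
  obtain ⟨e1, e2, e3, e4, e5, e6, e7, e8, e9⟩ := bwd_eval m0 μ0 μ1 μ2 p q r
  obtain ⟨r1, r2, r3, c1, c2, c3, d1, d2, d3⟩ := hm0
  refine ⟨?_, ?_, ?_, ?_, ?_, ?_, ?_, ?_, ?_⟩
  · rw [e1, e2, e3]; exact arith_line _ _ _ _ _ _ _ _ _ _ r1 ha0 hb2 hc1 s1
  · rw [e4, e5, e6]; exact arith_line _ _ _ _ _ _ _ _ _ _ r2 ha1 hb0 hc2 s2
  · rw [e7, e8, e9]; exact arith_line _ _ _ _ _ _ _ _ _ _ r3 ha2 hb1 hc0 s3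
  · rw [e1, e4, e7]; exact arith_line _ _ _ _ _ _ _ _ _ _ c1 ha0 ha1 ha2 hs
  · rw [e2, e5, e8]; exact arith_line _ _ _ _ _ _ _ _ _ _ c2 hb2 hb0 hb1 s4
  · rw [e3, e6, e9]; exact arith_line _ _ _ _ _ _ _ _ _ _ c3 hc1 hc2 hc0 s5
  · rw [e1, e6, e8]; exact arith_line _ _ _ _ _ _ _ _ _ _ d1 ha0 hc2 hb1 s1
  · rw [e3, e5, e7]; exact arith_line _ _ _ _ _ _ _ _ _ _ d2 hc1 hb0 ha2 s2
  · rw [e2, e4, e9]; exact arith_line _ _ _ _ _ _ _ _ _ _ d3 hb2 ha1 hc0 s3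

lemma matcard (a b c : Fin k → ZMod 3) :
    ∃ n : ℕ, Nat.card {m : ZMod 3 → ZMod 3 → ℕ // IsMat a b c m} = n * (n + 1) / 2 := by
  by_cases hne : Nonempty {m : ZMod 3 → ZMod 3 → ℕ // IsMat a b c m}
  · obtain ⟨⟨m0, hm0⟩⟩ := hne
    set μ0 := min (m0 0 0) (min (m0 1 1) (m0 2 2)) with hμ0
    set μ1 := min (m0 1 0) (min (m0 2 1) (m0 0 2)) with hμ1
    set μ2 := min (m0 2 0) (min (m0 0 1) (m0 1 2)) with hμ2
    have t0 := min3_le (m0 0 0) (m0 1 1) (m0 2 2)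
    have t1 := min3_le (m0 1 0) (m0 2 1) (m0 0 2)
    have t2 := min3_le (m0 2 0) (m0 0 1) (m0 1 2)
    rw [← hμ0] at t0
    rw [← hμ1] at t1
    rw [← hμ2] at t2
    obtain ⟨ha0, hb0, hc0⟩ := t0
    obtain ⟨ha1, hb1, hc1⟩ := t1
    obtain ⟨ha2, hb2, hc2⟩ := t2
    refine ⟨μ0 + μ1 + μ2 + 1, ?_⟩
    have E : {m : ZMod 3 → ZMod 3 → ℕ // IsMat a b c m}
        ≃ {p : ℕ × ℕ × ℕ // p.1 + p.2.1 + p.2.2 = μ0 + μ1 + μ2} :=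
      { toFun := fun m =>
          ⟨(m.1 0 0 + μ0 - m0 0 0, m.1 1 0 + μ1 - m0 1 0, m.1 2 0 + μ2 - m0 2 0), by
            obtain ⟨d1, d2, d3, d4, d5, d6, d7⟩ := mat_diff a b c m.1 m0 m.2 hm0
            have hv0 := arith_valid _ _ _ _ _ _ _ d1 d2 hμ0
            have hv1 := arith_valid _ _ _ _ _ _ _ d3 d4 hμ1
            have hv2 := arith_valid _ _ _ _ _ _ _ d5 d6 hμ2
            show m.1 0 0 + μ0 - m0 0 0 + (m.1 1 0 + μ1 - m0 1 0) + (m.1 2 0 + μ2 - m0 2 0)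
              = μ0 + μ1 + μ2
            exact arith_fwd _ _ _ _ _ _ _ _ _ d7 hv0 hv1 hv2⟩
        invFun := fun p =>
          ⟨bwd m0 μ0 μ1 μ2 p.1.1 p.1.2.1 p.1.2.2,
            bwd_isMat a b c m0 hm0 μ0 μ1 μ2 p.1.1 p.1.2.1 p.1.2.2 hμ0 hμ1 hμ2 p.2⟩
        left_inv := by
          rintro ⟨m, hm⟩
          apply Subtype.ext
          dsimp only
          funext u v
          obtain ⟨d1, d2, d3, d4, d5, d6, d7⟩ := mat_diff a b c m m0 hm hm0
          have hv0 := arith_valid _ _ _ _ _ _ _ d1 d2 hμ0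
          have hv1 := arith_valid _ _ _ _ _ _ _ d3 d4 hμ1
          have hv2 := arith_valid _ _ _ _ _ _ _ d5 d6 hμ2
          obtain ⟨e1, e2, e3, e4, e5, e6, e7, e8, e9⟩ :=
            bwd_eval m0 μ0 μ1 μ2 (m 0 0 + μ0 - m0 0 0) (m 1 0 + μ1 - m0 1 0)
              (m 2 0 + μ2 - m0 2 0)
          rcases zmod3_cases u with hu | hu | hu <;> subst hu <;>
            rcases zmod3_cases v with hv | hv | hv <;> subst hv
          · rw [e1]; exact arith_cell _ _ _ _ _ rfl ha0 hv0
          · rw [e2]; exact arith_cell _ _ _ _ _ d5 hb2 hv2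
          · rw [e3]; exact arith_cell _ _ _ _ _ d4 hc1 hv1
          · rw [e4]; exact arith_cell _ _ _ _ _ rfl ha1 hv1
          · rw [e5]; exact arith_cell _ _ _ _ _ d1 hb0 hv0
          · rw [e6]; exact arith_cell _ _ _ _ _ d6 hc2 hv2
          · rw [e7]; exact arith_cell _ _ _ _ _ rfl ha2 hv2
          · rw [e8]; exact arith_cell _ _ _ _ _ d3 hb1 hv1
          · rw [e9]; exact arith_cell _ _ _ _ _ d2 hc0 hv0
        right_inv := by
          rintro ⟨⟨p, q, r⟩, hs⟩
          apply Subtype.ext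
          obtain ⟨e1, e2, e3, e4, e5, e6, e7, e8, e9⟩ := bwd_eval m0 μ0 μ1 μ2 p q r
          show (bwd m0 μ0 μ1 μ2 p q r 0 0 + μ0 - m0 0 0,
            bwd m0 μ0 μ1 μ2 p q r 1 0 + μ1 - m0 1 0,
            bwd m0 μ0 μ1 μ2 p q r 2 0 + μ2 - m0 2 0) = (p, q, r)
          rw [e1, e4, e7]
          exact Prod.ext (arith_rinv _ _ _ ha0) (Prod.ext (arith_rinv _ _ _ ha1)
            (arith_rinv _ _ _ ha2))
        }
    rw [Nat.card_congr E, triangle_count]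
  · refine ⟨0, ?_⟩
    have : IsEmpty {m : ZMod 3 → ZMod 3 → ℕ // IsMat a b c m} := not_nonempty_iff.mp hne
    simp [Nat.card_of_isEmpty]

end Rank3Aux

theorem rank3_orbit_count_is_triangular (k : ℕ) (hk : 1 ≤ k)
    (a b c : Fin k → ZMod 3) :
    ∃ n : ℕ, Morbits 3 k a b c = n * (n + 1) / 2 := by
  rw [Rank3Aux.morbits_eq_matcard a b c]
  exact Rank3Aux.matcard a b c
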